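/- Let G be a hereditary graph class containing K_2 and B a bipartite graph. Then c_u(G,B) ≤ (c_f(G,B))², i.e., the union G-covering number of a bipartite graph is at most the square of its folded G-covering number. -/
import Mathlib


open SimpleGraph

/-- A class of simple graphs on arbitrary (small) vertex types. -/
def GraphClass : Type 1 := ∀ (V : Type), SimpleGraph V → Prop

/-- The class contains the graph `K₂`. -/
def GraphClass.ContainsK2 (𝒢 : GraphClass) : Prop := 𝒢 (Fin 2) ⊤

/-- Hereditary: closed under induced subgraphs. -/
def GraphClass.Hereditary (𝒢 : GraphClass) : Prop :=
  ∀ (V : Type) (G : SimpleGraph V), 𝒢 V G → ∀ s : Set V, 𝒢 s (G.induce s)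

/-- Monotone: closed under (not necessarily spanning) subgraphs. -/
def GraphClass.MonotoneClass (𝒢 : GraphClass) : Prop :=
  ∀ (V : Type) (G : SimpleGraph V), 𝒢 V G →
    ∀ (s : Set V) (G' : SimpleGraph s), G' ≤ G.induce s → 𝒢 s G'

/-- Component-closed: every connected component of a member is a member. -/
def GraphClass.ComponentClosed (𝒢 : GraphClass) : Prop :=
  ∀ (V : Type) (G : SimpleGraph V), 𝒢 V G →
    ∀ c : G.ConnectedComponent, 𝒢 c.supp (G.induce c.supp)

/-- The vertex-disjoint union of a family of graphs. -/
def disjUnionGraph {ι : Type} {W : ι → Type} (G : ∀ i, SimpleGraph (W i)) :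
    SimpleGraph (Σ i, W i) :=
  SimpleGraph.fromRel (fun p q => ∃ h : p.1 = q.1, (G q.1).Adj (h ▸ p.2) q.2)

/-- Union-closed: closed under finite vertex-disjoint unions. -/
def GraphClass.UnionClosed (𝒢 : GraphClass) : Prop :=
  ∀ (ι : Type), Finite ι → ∀ (W : ι → Type) (G : ∀ i, SimpleGraph (W i)),
    (∀ i, 𝒢 (W i) (G i)) → 𝒢 _ (disjUnionGraph G)

/-- The union-closure of a class: all graphs isomorphic to a finite
vertex-disjoint union of members of the class. -/
def GraphClass.unionClosure (𝒢 : GraphClass) : GraphClass :=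
  fun V G => ∃ (ι : Type) (_ : Finite ι) (W : ι → Type) (Gs : ∀ i, SimpleGraph (W i)),
    (∀ i, 𝒢 (W i) (Gs i)) ∧ Nonempty (G ≃g disjUnionGraph Gs)

/-- A `𝒢`-cover of a host graph `H`: a finite family of finite guest graphs together
with homomorphisms to `H` such that every edge of `H` is hit. -/
structure GraphCover {V : Type} (H : SimpleGraph V) : Type 1 where
  ι : Type
  finι : Finite ι
  W : ι → Type
  finW : ∀ i, Finite (W i)
  G : ∀ i, SimpleGraph (W i)
  φ : ∀ i, G i →g H
  edge_surj : ∀ ⦃u v : V⦄, H.Adj u v → ∃ i, ∃ a b, (G i).Adj a b ∧ φ i a = u ∧ φ i b = v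

namespace GraphCover

variable {V : Type} {H : SimpleGraph V}

/-- All guests belong to the class `𝒢`. -/
def InClass (c : GraphCover H) (𝒢 : GraphClass) : Prop := ∀ i, 𝒢 (c.W i) (c.G i)

/-- The cover is injective on each guest. -/
def Injective (c : GraphCover H) : Prop := ∀ i, Function.Injective (c.φ i)

/-- The total number of preimages of a vertex `v` of the host. -/
noncomputable def mult (c : GraphCover H) (v : V) : ℕ :=
  Nat.card {p : Σ i, c.W i // c.φ p.1 p.2 = v}

/-- `s`-local: every host vertex has at most `s` preimages. -/
def IsLocal (c : GraphCover H) (s : ℕ) : Prop := ∀ v, c.mult v ≤ s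

/-- `t`-global: at most `t` guests are used. -/
def IsGlobal (c : GraphCover H) (t : ℕ) : Prop := Nat.card c.ι ≤ t

/-- The guests can be grouped into `t` groups of pairwise vertex-disjoint guests,
i.e. the cover uses at most `t` members of the union-closure of the class. -/
def IsUnion (c : GraphCover H) (t : ℕ) : Prop :=
  ∃ f : c.ι → Fin t, ∀ i j, i ≠ j → f i = f j →
    Disjoint (Set.range (c.φ i)) (Set.range (c.φ j))

end GraphCover

/-- The global `𝒢`-covering number. -/
noncomputable def globalCN (𝒢 : GraphClass) {V : Type} (H : SimpleGraph V) : ℕ :=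
  sInf {t | ∃ c : GraphCover H, c.InClass 𝒢 ∧ c.Injective ∧ c.IsGlobal t}

/-- The union `𝒢`-covering number. -/
noncomputable def unionCN (𝒢 : GraphClass) {V : Type} (H : SimpleGraph V) : ℕ :=
  sInf {t | ∃ c : GraphCover H, c.InClass 𝒢 ∧ c.Injective ∧ c.IsUnion t}

/-- The local `𝒢`-covering number. -/
noncomputable def localCN (𝒢 : GraphClass) {V : Type} (H : SimpleGraph V) : ℕ :=
  sInf {s | ∃ c : GraphCover H, c.InClass 𝒢 ∧ c.Injective ∧ c.IsLocal s}

/-- The folded `𝒢`-covering number. -/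
noncomputable def foldedCN (𝒢 : GraphClass) {V : Type} (H : SimpleGraph V) : ℕ :=
  sInf {s | ∃ c : GraphCover H, c.InClass 𝒢 ∧ c.IsLocal s}

/-- `H` has treewidth at most `w`, via tree-decompositions. -/
def TreewidthLE {V : Type} (H : SimpleGraph V) (w : ℕ) : Prop :=
  ∃ (ι : Type) (T : SimpleGraph ι) (bag : ι → Set V),
    T.Connected ∧ T.IsAcyclic ∧
    (∀ v, ∃ i, v ∈ bag i) ∧
    (∀ ⦃u v⦄, H.Adj u v → ∃ i, u ∈ bag i ∧ v ∈ bag i) ∧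
    (∀ v, (T.induce {i | v ∈ bag i}).Connected) ∧
    (∀ i, Nat.card (bag i) ≤ w + 1)

/-- `G` has maximum average degree at most `d`. -/
def madLE {V : Type} (G : SimpleGraph V) (d : ℚ) : Prop :=
  ∀ s : Set V, s.Nonempty → (2 * Nat.card (G.induce s).edgeSet : ℚ) ≤ d * Nat.card s

/-- A star forest: an acyclic graph with no path on four vertices, i.e. every
connected component is a star. -/
def IsStarForest {V : Type} (F : SimpleGraph V) : Prop :=
  F.IsAcyclic ∧ ∀ a b c d, F.Adj a b → F.Adj b c → F.Adj c d → a = c ∨ b = d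

/-- `F` is a weak induced subgraph of `H`: a subgraph each of whose connected
components is an induced subgraph of `H`. -/
def IsWeakInduced {V : Type} (F H : SimpleGraph V) : Prop :=
  F ≤ H ∧ ∀ u v, F.Reachable u v → H.Adj u v → F.Adj u v

/-- No induced cycle of length at least 4. -/
def IsChordal {V : Type} (G : SimpleGraph V) : Prop :=
  ∀ (n : ℕ), 4 ≤ n → ∀ s : Set V, ¬ Nonempty ((G.induce s) ≃g SimpleGraph.cycleGraph n)

/-- The intersection graph of a family of sets. -/
def intersectionGraph {ι V : Type} (S : ι → Set V) : SimpleGraph ι :=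
  SimpleGraph.fromRel (fun i j => (S i ∩ S j).Nonempty)

/-- The shift graph of a directed graph `D`: vertices are the directed edges,
and `uv` is adjacent to `xy` iff `v = x` (or symmetrically `y = u`). -/
def shiftGraph {V : Type} (D : V → V → Prop) : SimpleGraph {p : V × V // D p.1 p.2} :=
  SimpleGraph.fromRel (fun e f => e.val.2 = f.val.1)


lemma exists_inj_fin (α : Type) [Finite α] {s : ℕ} (h : Nat.card α ≤ s) :
    ∃ f : α → Fin s, Function.Injective f := by
  haveI := Fintype.ofFinite α
  rw [Nat.card_eq_fintype_card] at h
  have h' : Fintype.card α ≤ Fintype.card (Fin s) := by simpa using h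
  obtain ⟨f⟩ := Function.Embedding.nonempty_of_card_le h'
  exact ⟨f, f.injective⟩

lemma foldedSet_nonempty (𝒢 : GraphClass) (h2 : 𝒢.ContainsK2) {V : Type} [Fintype V]
    (B : SimpleGraph V) :
    ∃ s, ∃ c : GraphCover B, c.InClass 𝒢 ∧ c.IsLocal s := by
  classical
  refine ⟨Nat.card (Σ _ : {p : V × V // B.Adj p.1 p.2}, Fin 2),
    ⟨{p : V × V // B.Adj p.1 p.2}, inferInstance, fun _ => Fin 2, fun _ => inferInstance,
      fun _ => ⊤,
      fun e => ⟨fun a => if a = 0 then e.val.1 else e.val.2, ?_⟩, ?_⟩, ?_, ?_⟩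
  · intro a b hab
    have hne : a ≠ b := hab.ne
    fin_cases a <;> fin_cases b <;> simp_all
    · exact e.2
    · exact e.2.symm
  · intro u v huv
    exact ⟨⟨(u, v), huv⟩, 0, 1, by simp, rfl, rfl⟩
  · intro i
    exact h2
  · intro v
    exact Nat.card_le_card_of_injective Subtype.val Subtype.val_injective

/-- for a hereditary guest class and a bipartite host `B`,
`c_u(𝒢,B) ≤ c_f(𝒢,B)²`. -/
theorem union_le_folded_sq_bipartite (𝒢 : GraphClass) (h2 : 𝒢.ContainsK2)
    (hher : 𝒢.Hereditary) {V : Type} [Fintype V] (B : SimpleGraph V)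
    (hbip : B.Colorable 2) :
    unionCN 𝒢 B ≤ (foldedCN 𝒢 B) ^ 2 := by
  classical
  obtain ⟨κ⟩ := hbip
  have hSne : {s | ∃ c : GraphCover B, c.InClass 𝒢 ∧ c.IsLocal s}.Nonempty :=
    foldedSet_nonempty 𝒢 h2 B
  have hmem : foldedCN 𝒢 B ∈ {s | ∃ c : GraphCover B, c.InClass 𝒢 ∧ c.IsLocal s} :=
    Nat.sInf_mem hSne
  set s := foldedCN 𝒢 B with hs
  obtain ⟨c, hclass, hloc⟩ := hmem
  haveI := c.finι
  haveI : ∀ i, Finite (c.W i) := c.finW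
  have hind : ∀ v : V, ∃ f : {p : Σ i, c.W i // c.φ p.1 p.2 = v} → Fin s,
      Function.Injective f := fun v => exists_inj_fin _ (hloc v)
  choose ind hindinj using hind
  let idx : (Σ i, c.W i) → Fin s := fun p => ind (c.φ p.1 p.2) ⟨p, rfl⟩
  have idx_eq : ∀ (v : V) (p : Σ i, c.W i) (h : c.φ p.1 p.2 = v),
      idx p = ind v ⟨p, h⟩ := by
    intro v p h; subst h; rfl
  have idx_inj : ∀ p q : Σ i, c.W i, c.φ p.1 p.2 = c.φ q.1 q.2 → idx p = idx q → p = q := by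
    intro p q h hpq
    have h1 : idx p = ind (c.φ q.1 q.2) ⟨p, h⟩ := idx_eq _ p h
    have h2 : idx q = ind (c.φ q.1 q.2) ⟨q, rfl⟩ := idx_eq _ q rfl
    have := hindinj (c.φ q.1 q.2) (a₁ := ⟨p, h⟩) (a₂ := ⟨q, rfl⟩)
      (by rw [← h1, ← h2]; exact hpq)
    exact congrArg Subtype.val this
  let P : ∀ (k : c.ι), Fin s → Fin s → Set (c.W k) := fun k i j =>
    {a | (idx ⟨k, a⟩ = i ∧ κ (c.φ k a) = 0) ∨ (idx ⟨k, a⟩ = j ∧ κ (c.φ k a) = 1)}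
  have hfin2 : ∀ x : Fin 2, x = 0 ∨ x = 1 := by decide
  apply Nat.sInf_le
  refine ⟨⟨c.ι × Fin s × Fin s, inferInstance,
    fun t => P t.1 t.2.1 t.2.2, fun t => inferInstance,
    fun t => (c.G t.1).induce (P t.1 t.2.1 t.2.2),
    fun t => ⟨fun a => c.φ t.1 a.val, fun hab => (c.φ t.1).map_rel hab⟩, ?_⟩, ?_, ?_, ?_⟩
  · -- edge surjectivity
    intro u v huv
    obtain ⟨k, a, b, hab, ha, hb⟩ := c.edge_surj huv
    have hne : κ u ≠ κ v := κ.valid huv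
    rcases hfin2 (κ u) with hu | hu
    · have hv : κ v = 1 := by
        rcases hfin2 (κ v) with h | h
        · exact absurd (hu.trans h.symm) hne
        · exact h
      refine ⟨(k, idx ⟨k, a⟩, idx ⟨k, b⟩),
        ⟨a, Or.inl ⟨rfl, by rw [ha]; exact hu⟩⟩,
        ⟨b, Or.inr ⟨rfl, by rw [hb]; exact hv⟩⟩, hab, ha, hb⟩
    · have hv : κ v = 0 := by
        rcases hfin2 (κ v) with h | h
        · exact h
        · exact absurd (hu.trans h.symm) hne
      refine ⟨(k, idx ⟨k, b⟩, idx ⟨k, a⟩),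
        ⟨a, Or.inr ⟨rfl, by rw [ha]; exact hu⟩⟩,
        ⟨b, Or.inl ⟨rfl, by rw [hb]; exact hv⟩⟩, hab, ha, hb⟩
  · -- in class
    intro t
    exact hher _ _ (hclass t.1) _
  · -- injective
    rintro ⟨k, i, j⟩ a b h
    have h' : c.φ k a.val = c.φ k b.val := h
    have hidx : idx ⟨k, a.val⟩ = idx ⟨k, b.val⟩ := by
      rcases a.2 with ⟨hia, hκa⟩ | ⟨hia, hκa⟩ <;>
        rcases b.2 with ⟨hib, hκb⟩ | ⟨hib, hκb⟩
      · exact hia.trans hib.symm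
      · rw [h'] at hκa; rw [hκa] at hκb; exact absurd hκb (by decide)
      · rw [h'] at hκa; rw [hκa] at hκb; exact absurd hκb (by decide)
      · exact hia.trans hib.symm
    have := idx_inj ⟨k, a.val⟩ ⟨k, b.val⟩ h' hidx
    exact Subtype.ext (sigma_mk_injective this)
  · -- union into s^2 groups
    refine ⟨fun t => Fin.cast (pow_two s).symm (finProdFinEquiv (t.2.1, t.2.2)), ?_⟩
    rintro ⟨k, i, j⟩ ⟨k', i', j'⟩ hne hf
    have hpair : (i, j) = (i', j') := by
      apply finProdFinEquiv.injective
      have hval := congrArg Fin.val hf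
      simp only [Fin.coe_cast] at hval
      exact Fin.ext hval
    have hii : i = i' := by simpa using congrArg Prod.fst hpair
    have hjj : j = j' := by simpa using congrArg Prod.snd hpair
    have hkk : k ≠ k' := by
      intro h; apply hne; rw [h, hii, hjj]
    rw [Set.disjoint_left]
    rintro v ⟨x, hx⟩ ⟨y, hy⟩
    have hx' : c.φ k x.val = v := hx
    have hy' : c.φ k' y.val = v := hy
    have hφ : c.φ k x.val = c.φ k' y.val := by rw [hx', hy']
    have hidx : idx ⟨k, x.val⟩ = idx ⟨k', y.val⟩ := by
      rcases x.2 with ⟨hix, hκx⟩ | ⟨hix, hκx⟩ <;>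
        rcases y.2 with ⟨hiy, hκy⟩ | ⟨hiy, hκy⟩
      · rw [hix, hiy, hii]
      · rw [hφ] at hκx; rw [hκx] at hκy; exact absurd hκy (by decide)
      · rw [hφ] at hκx; rw [hκx] at hκy; exact absurd hκy (by decide)
      · rw [hix, hiy, hjj]
    have := idx_inj ⟨k, x.val⟩ ⟨k', y.val⟩ hφ hidx
    exact hkk (congrArg Sigma.fst this)
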